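/- arXiv:2407.21091 — 2 statements merged into one kernel-verified Lean document; each statement's English description precedes it below -/
import Mathlib

section
/- Suppose f_k(α̂ + t d) − f_k(α̂) ≤ −m₁ ‖d‖² t for a step t with t‖d‖ ≥ δ/n, and suppose |f_k(β) − f(β)| ≤ κ δ² for β ∈ {α̂, α̂ + t d}. If δ ≤ ‖d‖ / (16 n κ) and m₁ ≥ 1/4, then f(α̂ + t d) − f(α̂) ≤ −C₁ ‖d‖ δ with C₁ = 1/(8n). -/
/-- sufficient decrease of the true function (Lemma 3.5). -/
theorem stmt_2 {m : ℕ} (f fk : EuclideanSpace ℝ (Fin m) → ℝ)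
    (αhat d : EuclideanSpace ℝ (Fin m)) (t δ κ m₁ : ℝ) (n : ℕ) (hn : 1 ≤ n)
    (hδ : 0 < δ) (hκ : 0 < κ)
    (hdec : fk (αhat + t • d) - fk αhat ≤ -m₁ * ‖d‖ ^ 2 * t)
    (hstep : t * ‖d‖ ≥ δ / n)
    (happrox : ∀ β ∈ ({αhat, αhat + t • d} : Set (EuclideanSpace ℝ (Fin m))),
      |fk β - f β| ≤ κ * δ ^ 2)
    (hδd : δ ≤ ‖d‖ / (16 * n * κ)) (hm₁ : m₁ ≥ 1 / 4) :
    f (αhat + t • d) - f αhat ≤ -(1 / (8 * n)) * ‖d‖ * δ := by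
  have hN : (0:ℝ) < n := by exact_mod_cast Nat.pos_of_ne_zero (by omega)
  have h1 := abs_le.mp (happrox αhat (by simp))
  have h2 := abs_le.mp (happrox (αhat + t • d) (by simp))
  have nd : 0 < ‖d‖ := by
    rcases (norm_nonneg d).lt_or_eq with h | h
    · exact h
    · exfalso; rw [← h, mul_zero] at hstep
      have := div_pos hδ hN; linarith
  have htd : 0 < t * ‖d‖ := lt_of_lt_of_le (div_pos hδ hN) hstep
  have ht : 0 < t := by
    rcases mul_pos_iff.mp htd with ⟨h, _⟩ | ⟨_, h⟩
    · exact h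
    · linarith
  have ha : δ * (16 * ↑n * κ) ≤ ‖d‖ := (le_div_iff₀ (by positivity)).mp hδd
  have hb : δ ≤ t * ‖d‖ * ↑n := (div_le_iff₀ hN).mp hstep
  -- fk decrease bound: m₁‖d‖²t ≥ (1/4)·‖d‖·(δ/n)
  have key : -m₁ * ‖d‖ ^ 2 * t + 2 * (κ * δ ^ 2) ≤ -(1 / (8 * ↑n)) * ‖d‖ * δ := by
    have h3 : (1/4) * ‖d‖ * δ ≤ m₁ * ‖d‖ ^ 2 * t * ↑n := by
      nlinarith [mul_le_mul_of_nonneg_left hb (by positivity : (0:ℝ) ≤ (1/4) * ‖d‖),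
        mul_le_mul_of_nonneg_right (sub_nonneg.mpr hm₁) (by positivity : (0:ℝ) ≤ ‖d‖^2 * t * ↑n)]
    have h4 : 2 * (κ * δ ^ 2) * ↑n ≤ (1/8) * ‖d‖ * δ := by
      nlinarith [mul_le_mul_of_nonneg_left ha (by positivity : (0:ℝ) ≤ δ / 8)]
    have he : -(1 / (8 * (n:ℝ))) * ‖d‖ * δ = (-(1/8) * ‖d‖ * δ) / ↑n := by
      field_simp
    rw [he, le_div_iff₀ hN]
    nlinarith
  linarith [h1.1, h1.2, h2.1, h2.2, hdec, key]
end

section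
/- Let f_k satisfy the sufficient decrease f_k(α̂ + t d) − f_k(α̂) ≤ −2 C₁ ‖d‖ δ, let |f_k(β) − f(β)| ≤ κ δ² for β ∈ {α̂, α̂ + t d}, and let the estimates f̂₊, f̂ satisfy |f̂ − f(α̂)| ≤ ε_F δ² and |f̂₊ − f(α̂ + t d)| ≤ ε_F δ² with ε_F ≤ κ. If δ ≤ (1 − η₁) C₁ ‖d‖ / (2κ) for η₁ ∈ (0,1), then the ratio ρ = (f̂₊ − f̂)/(f_k(α̂ + t d) − f_k(α̂)) satisfies ρ ≥ η₁. -/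
/-- the acceptance ratio on accurate iterations is at least η₁ (Lemma 3.6). -/
theorem stmt_3 {m : ℕ} (f fk : EuclideanSpace ℝ (Fin m) → ℝ)
    (αhat d : EuclideanSpace ℝ (Fin m)) (t δ κ C₁ εF η₁ fhat fhatPlus : ℝ)
    (hδ : 0 < δ) (hκ : 0 < κ) (hC₁ : 0 < C₁) (hη₁ : η₁ ∈ Set.Ioo (0 : ℝ) 1)
    (hdec : fk (αhat + t • d) - fk αhat ≤ -2 * C₁ * ‖d‖ * δ)
    (happrox : ∀ β ∈ ({αhat, αhat + t • d} : Set (EuclideanSpace ℝ (Fin m))),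
      |fk β - f β| ≤ κ * δ ^ 2)
    (hacc1 : |fhat - f αhat| ≤ εF * δ ^ 2)
    (hacc2 : |fhatPlus - f (αhat + t • d)| ≤ εF * δ ^ 2)
    (hεF : εF ≤ κ)
    (hδd : δ ≤ (1 - η₁) * C₁ * ‖d‖ / (2 * κ)) :
    (fhatPlus - fhat) / (fk (αhat + t • d) - fk αhat) ≥ η₁ := by
  obtain ⟨hη₁0, hη₁1⟩ := hη₁
  have h2κ : (0:ℝ) < 2 * κ := by linarith
  have hδd' : δ * (2 * κ) ≤ (1 - η₁) * C₁ * ‖d‖ := (le_div_iff₀ h2κ).mp hδd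
  have hpos : 0 < (1 - η₁) * C₁ * ‖d‖ := lt_of_lt_of_le (mul_pos hδ h2κ) hδd'
  have hd : 0 < ‖d‖ := by nlinarith [mul_pos (show (0:ℝ) < 1 - η₁ by linarith) hC₁, norm_nonneg d]
  have ha1 := happrox αhat (by simp)
  have ha2 := happrox (αhat + t • d) (by simp)
  have hD : fk (αhat + t • d) - fk αhat < 0 := by nlinarith [mul_pos (mul_pos hC₁ hd) hδ]
  rw [ge_iff_le, le_div_iff_of_neg hD]
  have b1 := abs_le.mp ha1
  have b2 := abs_le.mp ha2
  have b3 := abs_le.mp hacc1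
  have b4 := abs_le.mp hacc2
  nlinarith [sq_nonneg δ, mul_pos hδ hκ]
end
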